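/- Let h : P(V) → [0,∞) with h(∅) = 0 and f : P_2(V) → [0,∞) with f(∅,∅) = 0, and write x^± := max(±x, 0) componentwise for x ∈ ℝ^n. Then: (a) if f(A,B) = h(A) + h(V∖B) − h(V) for all (A,B) ∈ P_2(V), then f^L = h^L on ℝ^n; (b) if f(A,B) = h(A) + h(B) for all (A,B) ∈ P_2(V) and h(A) = h(V∖A) for all A ⊆ V, then f^L = h^L; (c) if f(A,B) = h(A) for all (A,B) ∈ P_2(V), then f^L(x) = h^L(x) for all x ∈ [0,∞)^n; (d) if f(A,B) = h(A ∪ B) for all (A,B) ∈ P_2(V), then f^L(x) = h^L(x^+ + x^−) for all x ∈ ℝ^n; (e) if f(A,B) = h(A) + h(B) (respectively h(A) − h(B)) for all (A,B) ∈ P_2(V), then f^L(x) = h^L(x^+) + h^L(x^−) (respectively h^L(x^+) − h^L(x^−)) for all x ∈ ℝ^n. -/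

import Mathlib

open Finset

/-- The Lovász extension of a set function `h : 𝒫(V) → ℝ` on `V = Fin n`. -/
noncomputable def lovasz {n : ℕ} (h : Finset (Fin n) → ℝ) (x : Fin n → ℝ) : ℝ :=
  (∫ t in (⨅ i, x i)..(⨆ i, x i), h (Finset.univ.filter (fun i => t < x i))) +
    h Finset.univ * (⨅ i, x i)

/-- The disjoint-pair Lovász extension of `f : 𝒫₂(V) → ℝ` (only values on disjoint
pairs are used). -/
noncomputable def dpLovasz {n : ℕ} (f : Finset (Fin n) → Finset (Fin n) → ℝ)
    (x : Fin n → ℝ) : ℝ :=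
  ∫ t in (0:ℝ)..(⨆ i, |x i|),
    f (Finset.univ.filter (fun i => t < x i)) (Finset.univ.filter (fun i => t < -x i))

namespace DPAux
open MeasureTheory intervalIntegral
variable {n : ℕ}

noncomputable def fp (x : Fin n → ℝ) (t : ℝ) : Finset (Fin n) :=
  Finset.univ.filter (fun i => t < x i)

lemma fp_eq_univ {x : Fin n → ℝ} {t : ℝ} (ht : ∀ i, t < x i) : fp x t = Finset.univ := by
  simp [fp, Finset.eq_univ_iff_forall, ht]

lemma fp_eq_empty {x : Fin n → ℝ} {t : ℝ} (ht : ∀ i, x i ≤ t) : fp x t = ∅ := by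
  simp [fp, Finset.filter_eq_empty_iff, not_lt, ht]

lemma measurableSet_fp (x : Fin n → ℝ) (A : Finset (Fin n)) :
    MeasurableSet {t : ℝ | fp x t = A} := by
  have : {t : ℝ | fp x t = A} = ⋂ i, {t : ℝ | t < x i ↔ i ∈ A} := by
    ext t
    simp only [Set.mem_setOf_eq, Set.mem_iInter, Finset.ext_iff, fp, Finset.mem_filter,
      Finset.mem_univ, true_and]
  rw [this]
  refine MeasurableSet.iInter fun i => ?_
  by_cases hi : i ∈ A
  · have : {t : ℝ | t < x i ↔ i ∈ A} = Set.Iio (x i) := by ext t; simp [hi]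
    rw [this]; exact measurableSet_Iio
  · have : {t : ℝ | t < x i ↔ i ∈ A} = Set.Ici (x i) := by ext t; simp [hi, not_lt]
    rw [this]; exact measurableSet_Ici

lemma measurable_pair (g : Finset (Fin n) → Finset (Fin n) → ℝ) (x y : Fin n → ℝ) :
    Measurable fun t => g (fp x t) (fp y t) := by
  classical
  have hrw : (fun t => g (fp x t) (fp y t)) =
      fun t => ∑ A : Finset (Fin n),
        if fp x t = A then (∑ B : Finset (Fin n), if fp y t = B then g A B else 0) else 0 := by
    funext t
    simp [Finset.sum_ite_eq]
  rw [hrw]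
  refine Finset.measurable_sum _ fun A _ => ?_
  exact Measurable.ite (measurableSet_fp x A)
    (Finset.measurable_sum _ fun B _ =>
      Measurable.ite (measurableSet_fp y B) measurable_const measurable_const)
    measurable_const

lemma intInt_pair (g : Finset (Fin n) → Finset (Fin n) → ℝ) (x y : Fin n → ℝ) (a b : ℝ) :
    IntervalIntegrable (fun t => g (fp x t) (fp y t)) volume a b := by
  classical
  rw [intervalIntegrable_iff]
  refine Integrable.mono' (g := fun _ => ∑ A : Finset (Fin n), ∑ B : Finset (Fin n), |g A B|)
    (integrableOn_const measure_Ioc_lt_top.ne) ?_ ?_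
  · exact ((measurable_pair g x y).aestronglyMeasurable).restrict
  · refine Filter.Eventually.of_forall fun t => ?_
    calc ‖g (fp x t) (fp y t)‖ = |g (fp x t) (fp y t)| := rfl
      _ ≤ ∑ B : Finset (Fin n), |g (fp x t) B| :=
          Finset.single_le_sum (f := fun B => |g (fp x t) B|) (fun B _ => abs_nonneg _) (Finset.mem_univ _)
      _ ≤ ∑ A : Finset (Fin n), ∑ B : Finset (Fin n), |g A B| :=
          Finset.single_le_sum (f := fun A => ∑ B : Finset (Fin n), |g A B|)
            (fun A _ => Finset.sum_nonneg fun B _ => abs_nonneg _) (Finset.mem_univ _)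

lemma intInt_one (h : Finset (Fin n) → ℝ) (x : Fin n → ℝ) (a b : ℝ) :
    IntervalIntegrable (fun t => h (fp x t)) volume a b :=
  intInt_pair (fun A _ => h A) x x a b


lemma lovasz_eq_int (hn : 1 ≤ n) (h : Finset (Fin n) → ℝ) (hh0 : h ∅ = 0) (x : Fin n → ℝ) :
    lovasz h x = ∫ t in (0:ℝ)..(⨆ i, |x i|),
      (h (fp x t) + h (Finset.univ \ fp (fun i => -x i) t) - h Finset.univ) := by
  haveI : Nonempty (Fin n) := ⟨⟨0, hn⟩⟩
  set m := ⨅ i, x i with hm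
  set M := ⨆ i, x i with hM
  set R := ⨆ i, |x i| with hR
  have bddA : BddAbove (Set.range x) := (Set.finite_range x).bddAbove
  have bddB : BddBelow (Set.range x) := (Set.finite_range x).bddBelow
  have bddAa : BddAbove (Set.range fun i => |x i|) := (Set.finite_range _).bddAbove
  have hxR : ∀ i, |x i| ≤ R := fun i => le_ciSup bddAa i
  have hxM : ∀ i, x i ≤ M := fun i => le_ciSup bddA i
  have hmx : ∀ i, m ≤ x i := fun i => ciInf_le bddB i
  have hMR : M ≤ R := ciSup_le fun i => (le_abs_self _).trans (hxR i)
  have hmR : -R ≤ m := le_ciInf fun i => (abs_le.mp (hxR i)).1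
  have hmM : m ≤ M := (hmx ⟨0, hn⟩).trans (hxM ⟨0, hn⟩)
  have h0R : 0 ≤ R := (abs_nonneg (x ⟨0, hn⟩)).trans (hxR _)
  -- integral over [-R, m] is h univ * (m + R)
  have e1 : ∫ t in (-R)..m, h (fp x t) = h Finset.univ * (m + R) := by
    have hae : ∀ᵐ t : ℝ, t ≠ m := by
      refine MeasureTheory.ae_iff.mpr ?_
      simpa using measure_singleton (μ := volume) m
    have : ∫ t in (-R)..m, h (fp x t) = ∫ t in (-R)..m, h Finset.univ := by
      refine intervalIntegral.integral_congr_ae ?_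
      filter_upwards [hae] with t ht htmem
      rw [Set.uIoc_of_le (by linarith : -R ≤ m)] at htmem
      have htm : t < m := lt_of_le_of_ne htmem.2 ht
      rw [fp_eq_univ fun i => lt_of_lt_of_le htm (hmx i)]
    rw [this, intervalIntegral.integral_const, smul_eq_mul]; ring
  -- integral over [M, R] vanishes
  have e2 : ∫ t in M..R, h (fp x t) = 0 := by
    have : ∫ t in M..R, h (fp x t) = ∫ t in M..R, (0:ℝ) := by
      refine intervalIntegral.integral_congr fun t ht => ?_
      rw [Set.uIcc_of_le hMR] at ht
      rw [fp_eq_empty fun i => (hxM i).trans ht.1, hh0]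
    rw [this, intervalIntegral.integral_zero]
  have i1 := intInt_one h x
  have adj1 : (∫ t in (-R)..m, h (fp x t)) + (∫ t in m..M, h (fp x t)) = ∫ t in (-R)..M, h (fp x t) :=
    intervalIntegral.integral_add_adjacent_intervals (i1 _ _) (i1 _ _)
  have adj2 : (∫ t in (-R)..M, h (fp x t)) + (∫ t in M..R, h (fp x t)) = ∫ t in (-R)..R, h (fp x t) :=
    intervalIntegral.integral_add_adjacent_intervals (i1 _ _) (i1 _ _)
  have adj3 : (∫ t in (-R)..0, h (fp x t)) + (∫ t in (0:ℝ)..R, h (fp x t)) = ∫ t in (-R)..R, h (fp x t) :=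
    intervalIntegral.integral_add_adjacent_intervals (i1 _ _) (i1 _ _)
  -- the negative part
  have e4 : ∫ t in (0:ℝ)..R, h (fp x (-t)) = ∫ t in (-R)..0, h (fp x t) := by
    rw [intervalIntegral.integral_comp_neg (fun s => h (fp x s))]
    norm_num
  have e5 : ∫ t in (0:ℝ)..R, h (fp x (-t)) =
      ∫ t in (0:ℝ)..R, h (Finset.univ \ fp (fun i => -x i) t) := by
    have hfin : volume (Set.range fun i : Fin n => -x i) = 0 :=
      (Set.finite_range _).measure_zero volume
    have hae : ∀ᵐ t : ℝ, ∀ i, t ≠ -x i := by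
      refine MeasureTheory.ae_iff.mpr ?_
      have : {t : ℝ | ¬∀ i, t ≠ -x i} = Set.range fun i : Fin n => -x i := by
        ext t; simp [eq_comm, Set.mem_range]
      rw [this]; exact hfin
    refine intervalIntegral.integral_congr_ae ?_
    filter_upwards [hae] with t ht _
    congr 1
    ext i
    simp only [fp, Finset.mem_filter, Finset.mem_univ, true_and, Finset.mem_sdiff, not_lt]
    rw [neg_lt]
    exact ((ht i).symm.le_iff_lt).symm
  -- assemble
  have hrhs : ∫ t in (0:ℝ)..R,
      (h (fp x t) + h (Finset.univ \ fp (fun i => -x i) t) - h Finset.univ)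
      = (∫ t in (0:ℝ)..R, h (fp x t))
        + (∫ t in (0:ℝ)..R, h (Finset.univ \ fp (fun i => -x i) t)) - h Finset.univ * R := by
    have iA := intInt_one h x 0 R
    have iB : IntervalIntegrable (fun t => h (Finset.univ \ fp (fun i => -x i) t)) volume 0 R :=
      intInt_pair (fun _ B => h (Finset.univ \ B)) x (fun i => -x i) 0 R
    rw [intervalIntegral.integral_sub (iA.add iB) intervalIntegrable_const,
      intervalIntegral.integral_add iA iB, intervalIntegral.integral_const, smul_eq_mul]
    ring
  have hlhs : lovasz h x = (∫ t in m..M, h (fp x t)) + h Finset.univ * m := rfl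
  rw [hlhs, hrhs]
  have := e4.symm.trans e5
  linarith [adj1, adj2, adj3, e1, e2, this]

lemma lovasz_pos_eq (hn : 1 ≤ n) (h : Finset (Fin n) → ℝ) (hh0 : h ∅ = 0) (x : Fin n → ℝ) :
    lovasz h (fun i => max (x i) 0) = ∫ t in (0:ℝ)..(⨆ i, |x i|), h (fp x t) := by
  haveI : Nonempty (Fin n) := ⟨⟨0, hn⟩⟩
  rw [lovasz_eq_int hn h hh0]
  set R := ⨆ i, |x i| with hR
  set R' := ⨆ i, |max (x i) 0| with hR'
  have habs : ∀ i, |max (x i) 0| = max (x i) 0 := fun i => abs_of_nonneg (le_max_right _ _)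
  have bddAa : BddAbove (Set.range fun i => |x i|) := (Set.finite_range _).bddAbove
  have bddAb : BddAbove (Set.range fun i => |max (x i) 0|) := (Set.finite_range _).bddAbove
  have hxR : ∀ i, |x i| ≤ R := fun i => le_ciSup bddAa i
  have hxR' : ∀ i, x i ≤ R' := fun i =>
    ((le_max_left _ _).trans (habs i).ge).trans (le_ciSup bddAb i)
  have h0R' : 0 ≤ R' := le_trans (by positivity) ((habs ⟨0, hn⟩).ge.trans (le_ciSup bddAb _))
  have hR'R : R' ≤ R := ciSup_le fun i => (habs i).le.trans ((max_le (le_abs_self _) (abs_nonneg _)).trans (hxR i))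
  have key : ∀ t ∈ Set.uIcc (0:ℝ) R',
      (h (fp (fun i => max (x i) 0) t) +
        h (Finset.univ \ fp (fun i => -(max (x i) 0)) t) - h Finset.univ) = h (fp x t) := by
    intro t ht
    rw [Set.uIcc_of_le h0R'] at ht
    have ht0 : 0 ≤ t := ht.1
    have h1 : fp (fun i => max (x i) 0) t = fp x t := by
      unfold fp
      apply Finset.filter_congr
      intro i _
      rw [lt_max_iff]
      exact or_iff_left (not_lt.mpr ht0)
    have h2 : fp (fun i => -(max (x i) 0)) t = ∅ :=
      fp_eq_empty fun i => le_trans (neg_nonpos.mpr (le_max_right _ _)) ht0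
    rw [h1, h2, Finset.sdiff_empty]
    ring
  rw [intervalIntegral.integral_congr key]
  have e0 : ∫ t in R'..R, h (fp x t) = 0 := by
    have : ∫ t in R'..R, h (fp x t) = ∫ t in R'..R, (0:ℝ) := by
      refine intervalIntegral.integral_congr fun t ht => ?_
      rw [Set.uIcc_of_le hR'R] at ht
      rw [fp_eq_empty fun i => (hxR' i).trans ht.1, hh0]
    rw [this, intervalIntegral.integral_zero]
  have adj : (∫ t in (0:ℝ)..R', h (fp x t)) + (∫ t in R'..R, h (fp x t))
      = ∫ t in (0:ℝ)..R, h (fp x t) :=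
    intervalIntegral.integral_add_adjacent_intervals (intInt_one h x _ _) (intInt_one h x _ _)
  linarith

lemma lovasz_neg_eq (hn : 1 ≤ n) (h : Finset (Fin n) → ℝ) (hh0 : h ∅ = 0) (x : Fin n → ℝ) :
    lovasz h (fun i => max (-x i) 0) = ∫ t in (0:ℝ)..(⨆ i, |x i|), h (fp (fun i => -x i) t) := by
  have := lovasz_pos_eq hn h hh0 (fun i => -x i)
  simpa [abs_neg] using this


lemma fp_disj (x : Fin n → ℝ) {t : ℝ} (ht : 0 ≤ t) :
    Disjoint (fp x t) (fp (fun i => -x i) t) := by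
  rw [Finset.disjoint_left]
  intro i hi hi'
  simp only [fp, Finset.mem_filter] at hi hi'
  linarith [hi.2, hi'.2]

lemma sup_abs_nonneg (hn : 1 ≤ n) (x : Fin n → ℝ) : 0 ≤ ⨆ i, |x i| :=
  le_trans (abs_nonneg (x ⟨0, hn⟩))
    (le_ciSup ((Set.finite_range fun i => |x i|).bddAbove) ⟨0, hn⟩)

lemma dp_eq (f : Finset (Fin n) → Finset (Fin n) → ℝ) (x : Fin n → ℝ) :
    dpLovasz f x = ∫ t in (0:ℝ)..(⨆ i, |x i|), f (fp x t) (fp (fun i => -x i) t) := rfl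

lemma part_a (hn : 1 ≤ n) (h : Finset (Fin n) → ℝ) (hh0 : h ∅ = 0)
    (f : Finset (Fin n) → Finset (Fin n) → ℝ)
    (hfa : ∀ A B : Finset (Fin n), Disjoint A B →
      f A B = h A + h (Finset.univ \ B) - h Finset.univ) :
    dpLovasz f = lovasz h := by
  funext x
  rw [dp_eq, lovasz_eq_int hn h hh0 x]
  refine intervalIntegral.integral_congr fun t ht => ?_
  rw [Set.uIcc_of_le (sup_abs_nonneg hn x)] at ht
  exact hfa _ _ (fp_disj x ht.1)


end DPAux

open DPAux MeasureTheory intervalIntegral in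
/-- Relations between the original and the disjoint-pair Lovász extensions
(parts (a)–(e)); here `x⁺ i = max (x i) 0` and `x⁻ i = max (-x i) 0`. -/
theorem dpLovasz_lovasz_relations {n : ℕ} (hn : 1 ≤ n)
    (h : Finset (Fin n) → ℝ) (hh : ∀ A, 0 ≤ h A) (hh0 : h ∅ = 0)
    (f : Finset (Fin n) → Finset (Fin n) → ℝ)
    (hf : ∀ A B : Finset (Fin n), Disjoint A B → 0 ≤ f A B) (hf0 : f ∅ ∅ = 0) :
    -- (a)
    ((∀ A B : Finset (Fin n), Disjoint A B →
        f A B = h A + h (Finset.univ \ B) - h Finset.univ) →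
      dpLovasz f = lovasz h) ∧
    -- (b)
    ((∀ A B : Finset (Fin n), Disjoint A B → f A B = h A + h B) →
      (∀ A : Finset (Fin n), h A = h (Finset.univ \ A)) →
      dpLovasz f = lovasz h) ∧
    -- (c)
    ((∀ A B : Finset (Fin n), Disjoint A B → f A B = h A) →
      ∀ x : Fin n → ℝ, (∀ i, 0 ≤ x i) → dpLovasz f x = lovasz h x) ∧
    -- (d)
    ((∀ A B : Finset (Fin n), Disjoint A B → f A B = h (A ∪ B)) →
      ∀ x : Fin n → ℝ,
        dpLovasz f x = lovasz h (fun i => max (x i) 0 + max (-x i) 0)) ∧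
    -- (e), "+" version
    ((∀ A B : Finset (Fin n), Disjoint A B → f A B = h A + h B) →
      ∀ x : Fin n → ℝ,
        dpLovasz f x =
          lovasz h (fun i => max (x i) 0) + lovasz h (fun i => max (-x i) 0)) ∧
    -- (e), "−" version
    ((∀ A B : Finset (Fin n), Disjoint A B → f A B = h A - h B) →
      ∀ x : Fin n → ℝ,
        dpLovasz f x =
          lovasz h (fun i => max (x i) 0) - lovasz h (fun i => max (-x i) 0)) := by
  refine ⟨part_a hn h hh0 f, ?_, ?_, ?_, ?_, ?_⟩
  · -- (b)
    intro hb hsym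
    have hu : h Finset.univ = 0 := by
      rw [hsym Finset.univ, Finset.sdiff_self]; exact hh0
    refine part_a hn h hh0 f fun A B hd => ?_
    rw [hb A B hd, hsym B, hu]; ring
  · -- (c)
    intro hc x hx
    rw [dp_eq]
    have hcongr : ∀ t ∈ Set.uIcc (0:ℝ) (⨆ i, |x i|),
        f (fp x t) (fp (fun i => -x i) t) = h (fp x t) := by
      intro t ht
      rw [Set.uIcc_of_le (sup_abs_nonneg hn x)] at ht
      have : fp (fun i => -x i) t = ∅ :=
        fp_eq_empty fun i => le_trans (neg_nonpos.mpr (hx i)) ht.1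
      rw [this, hc _ _ (Finset.disjoint_empty_right _)]
    rw [intervalIntegral.integral_congr hcongr, ← lovasz_pos_eq hn h hh0 x,
      show (fun i => max (x i) 0) = x from funext fun i => max_eq_left (hx i)]
  · -- (d)
    intro hd x
    have hxx : (fun i => max (x i) 0 + max (-x i) 0) = fun i => max (|x i|) 0 := by
      funext i
      rw [max_zero_add_max_neg_zero_eq_abs_self, max_eq_left (abs_nonneg _)]
    rw [dp_eq, hxx]
    have := lovasz_pos_eq hn h hh0 (fun i => |x i|)
    simp only [abs_abs] at this
    rw [this]
    refine intervalIntegral.integral_congr fun t ht => ?_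
    rw [Set.uIcc_of_le (sup_abs_nonneg hn x)] at ht
    rw [hd _ _ (fp_disj x ht.1)]
    congr 1
    ext i
    simp only [fp, Finset.mem_filter, Finset.mem_univ, true_and, Finset.mem_union, lt_abs]
  · -- (e)+
    intro he x
    rw [dp_eq, lovasz_pos_eq hn h hh0 x, lovasz_neg_eq hn h hh0 x]
    rw [show (∫ t in (0:ℝ)..(⨆ i, |x i|), f (fp x t) (fp (fun i => -x i) t))
        = ∫ t in (0:ℝ)..(⨆ i, |x i|), (h (fp x t) + h (fp (fun i => -x i) t)) from
      intervalIntegral.integral_congr fun t ht => by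
        rw [Set.uIcc_of_le (sup_abs_nonneg hn x)] at ht
        exact he _ _ (fp_disj x ht.1)]
    exact intervalIntegral.integral_add (intInt_one h x _ _) (intInt_one h _ _ _)
  · -- (e)-
    intro he x
    rw [dp_eq, lovasz_pos_eq hn h hh0 x, lovasz_neg_eq hn h hh0 x]
    rw [show (∫ t in (0:ℝ)..(⨆ i, |x i|), f (fp x t) (fp (fun i => -x i) t))
        = ∫ t in (0:ℝ)..(⨆ i, |x i|), (h (fp x t) - h (fp (fun i => -x i) t)) from
      intervalIntegral.integral_congr fun t ht => by
        rw [Set.uIcc_of_le (sup_abs_nonneg hn x)] at ht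
        exact he _ _ (fp_disj x ht.1)]
    exact intervalIntegral.integral_sub (intInt_one h x _ _) (intInt_one h _ _ _)
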